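/- Representation formula for slice regular power series: if f(q) = ∑ₙ qⁿ aₙ converges on the quaternionic unit ball 𝔹⁴, then for any x, y ∈ ℝ and purely imaginary unit quaternions I, i with x + Iy ∈ 𝔹⁴, one has f(x + I y) = ½[f(x + i y) + f(x − i y)] + ½ I i [f(x − i y) − f(x + i y)]. -/

import Mathlib

open Quaternion

private lemma quat_sq_neg_one {J : ℍ[ℝ]} (hJ : J.re = 0) (hnJ : ‖J‖ = 1) : J * J = -1 := by
  have hns : normSq J = 1 := by rw [normSq_eq_norm_mul_self, hnJ]; norm_num
  rw [normSq_def'] at hns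
  ext <;>
    simp only [Quaternion.re_mul, Quaternion.imI_mul, Quaternion.imJ_mul, Quaternion.imK_mul,
      hJ, Quaternion.re_neg, Quaternion.imI_neg, Quaternion.imJ_neg, Quaternion.imK_neg,
      Quaternion.re_one, Quaternion.imI_one, Quaternion.imJ_one, Quaternion.imK_one] <;>
    nlinarith [hns]

private lemma quat_normSq_aux (x y : ℝ) {J : ℍ[ℝ]} (hJ : J.re = 0) (hnJ : ‖J‖ = 1) :
    normSq ((x : ℍ[ℝ]) + (y : ℍ[ℝ]) * J) = x ^ 2 + y ^ 2 := by
  have hns : normSq J = 1 := by rw [normSq_eq_norm_mul_self, hnJ]; norm_num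
  rw [normSq_def'] at hns ⊢
  rw [hJ] at hns
  simp only [Quaternion.re_add, Quaternion.imI_add, Quaternion.imJ_add, Quaternion.imK_add,
    Quaternion.re_coe, Quaternion.imI_coe, Quaternion.imJ_coe, Quaternion.imK_coe,
    Quaternion.re_mul, Quaternion.imI_mul, Quaternion.imJ_mul, Quaternion.imK_mul, hJ]
  ring_nf
  nlinarith [hns]

private lemma quat_norm_aux (x y : ℝ) {J : ℍ[ℝ]} (hJ : J.re = 0) (hnJ : ‖J‖ = 1) :
    ‖(x : ℍ[ℝ]) + (y : ℍ[ℝ]) * J‖ = Real.sqrt (x ^ 2 + y ^ 2) := by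
  rw [← Real.sqrt_mul_self (norm_nonneg _), ← normSq_eq_norm_mul_self,
    quat_normSq_aux x y hJ hnJ]

private lemma quat_pow_rep (x y : ℝ) {J : ℍ[ℝ]} (hJ2 : J * J = -1) (n : ℕ) :
    ((x : ℍ[ℝ]) + (y : ℍ[ℝ]) * J) ^ n =
      ((((x : ℂ) + (y : ℂ) * Complex.I) ^ n).re : ℍ[ℝ]) +
      ((((x : ℂ) + (y : ℂ) * Complex.I) ^ n).im : ℍ[ℝ]) * J := by
  have key : ∀ z : ℂ, Complex.liftAux J hJ2 z = ((z.re : ℍ[ℝ]) + (z.im : ℍ[ℝ]) * J) := by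
    intro z
    rw [Complex.liftAux_apply, Quaternion.algebraMap_def, ← Quaternion.coe_mul_eq_smul]
  have hz : Complex.liftAux J hJ2 (((x : ℂ) + (y : ℂ) * Complex.I) ^ n)
      = ((x : ℍ[ℝ]) + (y : ℍ[ℝ]) * J) ^ n := by
    rw [map_pow, key]
    simp
  rw [← hz, key]

theorem stmt_10 (a : ℕ → ℍ[ℝ])
    (hconv : ∀ r : ℝ, 0 ≤ r → r < 1 → Summable fun n : ℕ => ‖a n‖ * r ^ n)
    (x y : ℝ) (I i : ℍ[ℝ])
    (hI : I.re = 0) (hnI : ‖I‖ = 1) (hi : i.re = 0) (hni : ‖i‖ = 1)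
    (hq : ‖(x : ℍ[ℝ]) + (y : ℍ[ℝ]) * I‖ < 1) :
    (∑' n : ℕ, ((x : ℍ[ℝ]) + (y : ℍ[ℝ]) * I) ^ n * a n) =
      ((∑' n : ℕ, ((x : ℍ[ℝ]) + (y : ℍ[ℝ]) * i) ^ n * a n) +
       (∑' n : ℕ, ((x : ℍ[ℝ]) - (y : ℍ[ℝ]) * i) ^ n * a n)) / 2 +
      I * i * (((∑' n : ℕ, ((x : ℍ[ℝ]) - (y : ℍ[ℝ]) * i) ^ n * a n) -
       (∑' n : ℕ, ((x : ℍ[ℝ]) + (y : ℍ[ℝ]) * i) ^ n * a n)) / 2) := by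
  have hI2 : I * I = -1 := quat_sq_neg_one hI hnI
  have hi2 : i * i = -1 := quat_sq_neg_one hi hni
  have hni2 : (-i) * (-i) = -1 := by rw [neg_mul_neg]; exact hi2
  have hmin : (x : ℍ[ℝ]) - (y : ℍ[ℝ]) * i = (x : ℍ[ℝ]) + (y : ℍ[ℝ]) * (-i) := by
    rw [mul_neg, sub_eq_add_neg]
  have hr0 : 0 ≤ Real.sqrt (x ^ 2 + y ^ 2) := Real.sqrt_nonneg _
  have hr1 : Real.sqrt (x ^ 2 + y ^ 2) < 1 := by
    rw [← quat_norm_aux x y hI hnI]; exact hq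
  have hsum : ∀ {J : ℍ[ℝ]}, J.re = 0 → ‖J‖ = 1 →
      Summable fun n : ℕ => ((x : ℍ[ℝ]) + (y : ℍ[ℝ]) * J) ^ n * a n := by
    intro J hJ hnJ
    apply Summable.of_norm
    have : (fun n : ℕ => ‖((x : ℍ[ℝ]) + (y : ℍ[ℝ]) * J) ^ n * a n‖)
        = fun n : ℕ => ‖a n‖ * Real.sqrt (x ^ 2 + y ^ 2) ^ n := by
      funext n
      rw [norm_mul, norm_pow, quat_norm_aux x y hJ hnJ, mul_comm]
    rw [this]
    exact hconv _ hr0 hr1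
  have hire : (-i).re = 0 := by simp [hi]
  have hin : ‖-i‖ = 1 := by rw [norm_neg]; exact hni
  set S : ℕ → ℍ[ℝ] := fun n => ((x : ℍ[ℝ]) + (y : ℍ[ℝ]) * i) ^ n * a n with hSdef
  set T : ℕ → ℍ[ℝ] := fun n => ((x : ℍ[ℝ]) - (y : ℍ[ℝ]) * i) ^ n * a n with hTdef
  have hS : Summable S := hsum hi hni
  have hT : Summable T := by rw [hTdef]; simp only [hmin]; exact hsum hire hin
  have h2div : ∀ c : ℍ[ℝ], (2 * c) / 2 = c := by
    intro c
    have h2 : (2 : ℍ[ℝ]) ≠ 0 := by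
      have h : (2:ℍ[ℝ]) = ((2:ℝ):ℍ[ℝ]) := by norm_cast
      rw [h, ne_eq, ← Quaternion.coe_zero, Quaternion.coe_inj]
      norm_num
    rw [div_eq_iff h2, two_mul, mul_two]
  have hterm : ∀ n : ℕ, ((x : ℍ[ℝ]) + (y : ℍ[ℝ]) * I) ^ n * a n
      = (S n + T n) / 2 + I * i * ((T n - S n) / 2) := by
    intro n
    set α : ℝ := (((x : ℂ) + (y : ℂ) * Complex.I) ^ n).re with hα
    set β : ℝ := (((x : ℂ) + (y : ℂ) * Complex.I) ^ n).im with hβ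
    have rI : ((x : ℍ[ℝ]) + (y : ℍ[ℝ]) * I) ^ n = (α : ℍ[ℝ]) + (β : ℍ[ℝ]) * I :=
      quat_pow_rep x y hI2 n
    have ri : ((x : ℍ[ℝ]) + (y : ℍ[ℝ]) * i) ^ n = (α : ℍ[ℝ]) + (β : ℍ[ℝ]) * i :=
      quat_pow_rep x y hi2 n
    have rmi : ((x : ℍ[ℝ]) - (y : ℍ[ℝ]) * i) ^ n = (α : ℍ[ℝ]) - (β : ℍ[ℝ]) * i := by
      rw [hmin, quat_pow_rep x y hni2 n, mul_neg, ← sub_eq_add_neg]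
    rw [hSdef, hTdef]
    simp only [rI, ri, rmi]
    set b : ℍ[ℝ] := a n with hb
    have e1 : ((α : ℍ[ℝ]) + (β : ℍ[ℝ]) * i) * b + ((α : ℍ[ℝ]) - (β : ℍ[ℝ]) * i) * b
        = 2 * ((α : ℍ[ℝ]) * b) := by noncomm_ring
    have e2 : ((α : ℍ[ℝ]) - (β : ℍ[ℝ]) * i) * b - ((α : ℍ[ℝ]) + (β : ℍ[ℝ]) * i) * b
        = 2 * (-((β : ℍ[ℝ]) * i * b)) := by noncomm_ring
    rw [e1, e2, h2div, h2div]
    have e3 : I * i * -((β : ℍ[ℝ]) * i * b) = (β : ℍ[ℝ]) * (I * b) := by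
      simp only [Quaternion.coe_mul_eq_smul, mul_neg, smul_mul_assoc, mul_smul_comm]
      rw [mul_assoc I i, ← mul_assoc i i, hi2]
      simp
    rw [e3, add_mul, mul_assoc]
  calc (∑' n : ℕ, ((x : ℍ[ℝ]) + (y : ℍ[ℝ]) * I) ^ n * a n)
      = ∑' n : ℕ, ((S n + T n) / 2 + I * i * ((T n - S n) / 2)) := tsum_congr hterm
    _ = (∑' n : ℕ, (S n + T n) / 2) + ∑' n : ℕ, I * i * ((T n - S n) / 2) :=
        Summable.tsum_add ((hS.add hT).div_const 2) (((hT.sub hS).div_const 2).mul_left _)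
    _ = ((∑' n, S n) + (∑' n, T n)) / 2 + I * i * (((∑' n, T n) - (∑' n, S n)) / 2) := by
        rw [tsum_div_const, tsum_mul_left, tsum_div_const, Summable.tsum_add hS hT, Summable.tsum_sub hT hS]
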